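/- Let $R$ be a commutative ring, $G$ and $H$ finite groups, $X \leq H \times G$ a subgroup, and $M$ an $RX$-module. Let $U = (H \times G)/X$ be the $(H,G)$-biset with action $h \cdot (t,s)X \cdot g = (ht, g^{-1}s)X$. Define a functor $\tilde{M}: \mathcal{C}_U \to R\text{-}\mathsf{Mod}$ by $\tilde{M}((h,g)X) = M$, with structure maps determined by a chosen set $S$ of coset representatives: for $(t,s) \in S$ and $(h,g) \in H \times G$, the map $\tilde{M}(h,g): \tilde{M}((t,s)X) \to \tilde{M}((ht,gs)X)$ sends $m$ to $(y,x)\cdot m$ where $(y,x) \in X$ is the unique element with $(ht,gs)(y,x)^{-1} \in S$. Then $\tilde M$ is a well-defined functor and there is an isomorphism of $(RH,RG)$-bimodules $\Sigma(\tilde{M}) \cong \mathrm{Ind}_X^{H \times G} M$. -/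

import Mathlib

open CategoryTheory MulOpposite

/-- An object wrapper: the objects of the category associated to an `(H,G)`-biset `U`
are the elements of `U`. -/
structure BisetCat (H G U : Type*) where
  x : U

variable {H G U : Type*} [Group H] [Group G]
  [MulAction H U] [MulAction Gᵐᵒᵖ U] [SMulCommClass H Gᵐᵒᵖ U]

/-- The category associated to an `(H,G)`-biset `U`: objects are elements of `U`,
and morphisms `u ⟶ v` are pairs `(h,g)` with `h • u = v • g`; composition of
`(h,g) : u ⟶ v` and `(h',g') : v ⟶ w` is `(h'*h, g'*g)` and the identity is `(1,1)`. -/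
instance bisetCategory : Category (BisetCat H G U) where
  Hom u v := {p : H × G // p.1 • u.x = op p.2 • v.x}
  id u := ⟨(1, 1), by simp⟩
  comp {u v w} f g := ⟨(g.1.1 * f.1.1, g.1.2 * f.1.2), by
    have hf := f.2; have hg := g.2
    calc (g.1.1 * f.1.1) • u.x = g.1.1 • (f.1.1 • u.x) := by rw [mul_smul]
    _ = g.1.1 • (op f.1.2 • v.x) := by rw [hf]
    _ = op f.1.2 • (g.1.1 • v.x) := by rw [smul_comm]
    _ = op f.1.2 • (op g.1.2 • w.x) := by rw [hg]
    _ = op (g.1.2 * f.1.2) • w.x := by rw [← mul_smul, ← op_mul]⟩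
  id_comp f := Subtype.ext (by simp [Prod.ext_iff])
  comp_id f := Subtype.ext (by simp [Prod.ext_iff])
  assoc f g h := Subtype.ext (by simp [Prod.ext_iff, mul_assoc])


open TensorProduct DirectSum

universe u

attribute [local instance] Classical.propDecidable

open TensorProduct

/-- The relations defining the induced module `R Γ ⊗_{R X} M`: the submodule of
`R Γ ⊗_R M` spanned by the elements `(a x) ⊗ m - a ⊗ (x • m)` for `x ∈ X`. -/
noncomputable def indRel (R Γ : Type*) [CommRing R] [Group Γ] (X : Subgroup Γ)
    (M : Type*) [AddCommGroup M] [Module R M] (ρ : X →* Module.End R M) :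
    Submodule R ((MonoidAlgebra R Γ) ⊗[R] M) :=
  Submodule.span R {z | ∃ (γ : Γ) (x : X) (m : M),
    z = MonoidAlgebra.single (γ * (x : Γ)) (1 : R) ⊗ₜ[R] m -
        MonoidAlgebra.single γ (1 : R) ⊗ₜ[R] (ρ x m)}

/-- The induced module `Ind_X^Γ M = R Γ ⊗_{R X} M`, realized as the quotient of
`R Γ ⊗_R M` by the induction relations. -/
def Ind (R Γ : Type*) [CommRing R] [Group Γ] (X : Subgroup Γ)
    (M : Type*) [AddCommGroup M] [Module R M] (ρ : X →* Module.End R M) :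
    Type _ :=
  ((MonoidAlgebra R Γ) ⊗[R] M) ⧸ indRel R Γ X M ρ

noncomputable instance (R Γ : Type*) [CommRing R] [Group Γ] (X : Subgroup Γ)
    (M : Type*) [AddCommGroup M] [Module R M] (ρ : X →* Module.End R M) :
    AddCommGroup (Ind R Γ X M ρ) :=
  inferInstanceAs (AddCommGroup (((MonoidAlgebra R Γ) ⊗[R] M) ⧸ indRel R Γ X M ρ))

noncomputable instance (R Γ : Type*) [CommRing R] [Group Γ] (X : Subgroup Γ)
    (M : Type*) [AddCommGroup M] [Module R M] (ρ : X →* Module.End R M) :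
    Module R (Ind R Γ X M ρ) :=
  inferInstanceAs (Module R (((MonoidAlgebra R Γ) ⊗[R] M) ⧸ indRel R Γ X M ρ))

/-- The canonical generator `(c γ) ⊗ m` of the induced module. -/
noncomputable def Ind.gen (R Γ : Type*) [CommRing R] [Group Γ] (X : Subgroup Γ)
    (M : Type*) [AddCommGroup M] [Module R M] (ρ : X →* Module.End R M)
    (γ : Γ) (c : R) (m : M) : Ind R Γ X M ρ :=
  Submodule.Quotient.mk (MonoidAlgebra.single γ c ⊗ₜ[R] m)

variable {H G : Type u} [Group H] [Group G] (X : Subgroup (H × G))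

/-- The left `H`-action on `(H × G)/X`: `h • (t,s)X = (ht, s)X`. -/
instance quotHAction : MulAction H ((H × G) ⧸ X) where
  smul h q := ((h, (1 : G)) : H × G) • q
  one_smul q := by show ((1, (1:G)) : H × G) • q = q; exact one_smul (H × G) q
  mul_smul h h' q := by
    show (((h * h', (1:G)) : H × G)) • q = ((h, (1:G)) : H × G) • (((h', (1:G)) : H × G) • q)
    rw [smul_smul]
    congr 1
    ext <;> simp

/-- The right `G`-action on `(H × G)/X`: `(t,s)X • g = (t, g⁻¹s)X`. -/
instance quotGAction : MulAction Gᵐᵒᵖ ((H × G) ⧸ X) where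
  smul g q := (((1 : H), g.unop⁻¹) : H × G) • q
  one_smul q := by show (((1:H), (1:G)⁻¹) : H × G) • q = q; simp; exact one_smul (H × G) q
  mul_smul g g' q := by
    show (((1:H), (g * g').unop⁻¹) : H × G) • q =
      (((1:H), g.unop⁻¹) : H × G) • ((((1:H), g'.unop⁻¹) : H × G) • q)
    rw [smul_smul]
    congr 1
    ext <;> simp [mul_comm]

instance quotSMulComm : SMulCommClass H Gᵐᵒᵖ ((H × G) ⧸ X) where
  smul_comm h g q := by
    show ((h, (1:G)) : H × G) • ((((1:H), g.unop⁻¹) : H × G) • q) =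
      (((1:H), g.unop⁻¹) : H × G) • (((h, (1:G)) : H × G) • q)
    rw [smul_smul, smul_smul]
    congr 1
    ext <;> simp

lemma quot_smul_aux (h : H) (g : G) (q : (H × G) ⧸ X) :
    h • q = (op g : Gᵐᵒᵖ) • (((h, g) : H × G) • q) := by
  show ((h, (1:G)) : H × G) • q = (((1:H), g⁻¹) : H × G) • (((h, g) : H × G) • q)
  rw [smul_smul]
  congr 1
  ext <;> simp

section AuxProof

variable {R M : Type u} [CommRing R] [AddCommGroup M] [Module R M]
variable (ρ : X →* Module.End R M)

lemma memX_aux (γ : H × G) :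
    (Quotient.out (QuotientGroup.mk γ : (H × G) ⧸ X))⁻¹ * γ ∈ X :=
  QuotientGroup.eq.mp (QuotientGroup.out_eq' _)

lemma smul_eq_mkq (p : H × G) (q : (H × G) ⧸ X) :
    p • q = QuotientGroup.mk (p * Quotient.out q) := by
  conv_lhs => rw [← QuotientGroup.out_eq' q]
  rfl

lemma memX_smul (p : H × G) {q q' : (H × G) ⧸ X} (hq : p • q = q') :
    (Quotient.out q')⁻¹ * (p * Quotient.out q) ∈ X := by
  subst hq
  rw [smul_eq_mkq]
  exact memX_aux X _

lemma hom_cond {q q' : (H × G) ⧸ X} (p : H × G) (hp : p.1 • q = op p.2 • q') :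
    p • q = q' := by
  have hp' : ((p.1, (1 : G)) : H × G) • q = (((1 : H), p.2⁻¹) : H × G) • q' := hp
  have h1 : p • q = (((1 : H), p.2) : H × G) • (((p.1, (1 : G)) : H × G) • q) := by
    rw [smul_smul]; congr 1; ext <;> simp
  rw [h1, hp', smul_smul]
  convert one_smul (H × G) q' using 2
  ext <;> simp

lemma rho_coe_congr {x y : X} (h : (x : H × G) = (y : H × G)) : ρ x = ρ y :=
  congrArg ρ (Subtype.ext h)

/-- The functor `M̃`. -/
@[reducible] noncomputable def Mtilde : BisetCat H G ((H × G) ⧸ X) ⥤ ModuleCat.{u} R where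
  obj _ := ModuleCat.of R M
  map {u v} f :=
    ModuleCat.ofHom (ρ ⟨(Quotient.out v.x)⁻¹ * (f.1 * Quotient.out u.x),
        memX_smul X f.1 (hom_cond X f.1 f.2)⟩ : M →ₗ[R] M)
  map_id u := by
    apply ModuleCat.hom_ext
    refine Eq.trans (rho_coe_congr X ρ (y := 1) ?_) (map_one ρ)
    show (Quotient.out u.x)⁻¹ * ((1 : H × G) * Quotient.out u.x) = 1
    simp
  map_comp {u v w} f g := by
    apply ModuleCat.hom_ext
    refine Eq.trans (rho_coe_congr X ρ
      (y := ⟨(Quotient.out w.x)⁻¹ * (g.1 * Quotient.out v.x),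
              memX_smul X g.1 (hom_cond X g.1 g.2)⟩ *
            ⟨(Quotient.out v.x)⁻¹ * (f.1 * Quotient.out u.x),
              memX_smul X f.1 (hom_cond X f.1 f.2)⟩) ?_) (map_mul ρ _ _)
    show (Quotient.out w.x)⁻¹ * ((g.1 * f.1) * Quotient.out u.x) =
      ((Quotient.out w.x)⁻¹ * (g.1 * Quotient.out v.x)) *
        ((Quotient.out v.x)⁻¹ * (f.1 * Quotient.out u.x))
    simp [mul_assoc]

/-- The element of `X` attached to `p` and `q`. -/
noncomputable def xel (p : H × G) (q : (H × G) ⧸ X) : X :=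
  ⟨(Quotient.out (p • q))⁻¹ * (p * Quotient.out q), memX_smul X p rfl⟩

noncomputable def rhoSaux (p : H × G) :
    (⨁ q : (H × G) ⧸ X, (Mtilde X ρ).obj ⟨q⟩) →ₗ[R]
      (⨁ q : (H × G) ⧸ X, (Mtilde X ρ).obj ⟨q⟩) :=
  DirectSum.toModule R _ _ fun q =>
    (DirectSum.lof R ((H × G) ⧸ X) (fun q => (Mtilde X ρ).obj ⟨q⟩) (p • q)) ∘ₗ
      (ρ (xel X p q) : M →ₗ[R] M)

lemma rhoSaux_lof (p : H × G) (q : (H × G) ⧸ X) (m : M) :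
    rhoSaux X ρ p (DirectSum.lof R _ (fun q => (Mtilde X ρ).obj ⟨q⟩) q m) =
      DirectSum.lof R _ (fun q => (Mtilde X ρ).obj ⟨q⟩) (p • q) (ρ (xel X p q) m) :=
  DirectSum.toModule_lof R _ _

noncomputable def rhoS :
    (H × G) →* Module.End R (⨁ q : (H × G) ⧸ X, (Mtilde X ρ).obj ⟨q⟩) where
  toFun := rhoSaux X ρ
  map_one' := by
    refine DirectSum.linearMap_ext R fun q => LinearMap.ext fun m => ?_
    rw [LinearMap.comp_apply, rhoSaux_lof]
    have h1 : (1 : H × G) • q = q := one_smul _ _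
    have h2 : xel X (1 : H × G) q = 1 := Subtype.ext (by simp [xel, h1])
    rw [h2, map_one, h1]
    simp [Module.End.one_apply]
  map_mul' p p' := by
    refine DirectSum.linearMap_ext R fun q => LinearMap.ext fun m => ?_
    simp only [LinearMap.comp_apply, Module.End.mul_apply]; rw [rhoSaux_lof, rhoSaux_lof, rhoSaux_lof]
    have h1 : (p * p') • q = p • (p' • q) := mul_smul _ _ _
    have h2 : xel X (p * p') q = xel X p (p' • q) * xel X p' q := by
      refine Subtype.ext ?_
      show (Quotient.out ((p * p') • q))⁻¹ * ((p * p') * Quotient.out q) =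
        ((Quotient.out (p • (p' • q)))⁻¹ * (p * Quotient.out (p' • q))) *
          ((Quotient.out (p' • q))⁻¹ * (p' * Quotient.out q))
      rw [h1]
      simp [mul_assoc]
    rw [h2, map_mul, h1]
    simp [Module.End.mul_apply]

noncomputable def rhoIaux (p : H × G) :
    Ind R (H × G) X M ρ →ₗ[R] Ind R (H × G) X M ρ :=
  Submodule.mapQ _ _
    (LinearMap.rTensor M (LinearMap.mulLeft R (MonoidAlgebra.single p (1 : R))))
    (by
      rw [← Submodule.map_le_iff_le_comap, indRel, Submodule.map_span, Submodule.span_le]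
      rintro z ⟨w, ⟨γ, x, m, rfl⟩, rfl⟩
      refine Submodule.subset_span ⟨p * γ, x, m, ?_⟩
      simp [LinearMap.rTensor_tmul, LinearMap.mulLeft_apply,
        MonoidAlgebra.single_mul_single, mul_assoc])

lemma rhoIaux_gen (p p' : H × G) (c : R) (m : M) :
    rhoIaux X ρ p (Ind.gen R (H × G) X M ρ p' c m) =
      Ind.gen R (H × G) X M ρ (p * p') c m := by
  show Submodule.mapQ _ _ _ _ (Submodule.Quotient.mk _) = Submodule.Quotient.mk _
  rw [Submodule.mapQ_apply]
  congr 1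
  simp [LinearMap.rTensor_tmul, LinearMap.mulLeft_apply, MonoidAlgebra.single_mul_single]

lemma ind_hom_ext {T : Type u} [AddCommGroup T] [Module R T]
    {f g : Ind R (H × G) X M ρ →ₗ[R] T}
    (h : ∀ (γ : H × G) (m : M),
      f (Ind.gen R (H × G) X M ρ γ 1 m) = g (Ind.gen R (H × G) X M ρ γ 1 m)) :
    f = g := by
  refine Submodule.linearMap_qext _ ?_
  refine TensorProduct.ext ?_
  refine MonoidAlgebra.lhom_ext' fun γ => ?_
  refine LinearMap.ext_ring ?_
  refine LinearMap.ext fun m => ?_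
  exact h γ m

noncomputable def rhoI : (H × G) →* Module.End R (Ind R (H × G) X M ρ) where
  toFun := rhoIaux X ρ
  map_one' := ind_hom_ext X ρ fun γ m => by
    rw [rhoIaux_gen, one_mul]; rfl
  map_mul' p p' := ind_hom_ext X ρ fun γ m => by
    simp only [Module.End.mul_apply, rhoIaux_gen, mul_assoc]

lemma gen_rel (γ : H × G) (x : X) (m : M) :
    Ind.gen R (H × G) X M ρ (γ * x) 1 m = Ind.gen R (H × G) X M ρ γ 1 (ρ x m) := by
  unfold Ind.gen
  refine (Submodule.Quotient.eq _).mpr ?_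
  exact Submodule.subset_span ⟨γ, x, m, rfl⟩

noncomputable def Fg (γ : H × G) :
    M →ₗ[R] (⨁ q : (H × G) ⧸ X, (Mtilde X ρ).obj ⟨q⟩) :=
  (DirectSum.lof R ((H × G) ⧸ X) (fun q => (Mtilde X ρ).obj ⟨q⟩) (QuotientGroup.mk γ)) ∘ₗ
    (ρ ⟨(Quotient.out (QuotientGroup.mk γ : (H × G) ⧸ X))⁻¹ * γ, memX_aux X γ⟩ : M →ₗ[R] M)

lemma Fg_eq (γ : H × G) {q : (H × G) ⧸ X} (hq : (QuotientGroup.mk γ : (H × G) ⧸ X) = q)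
    (hmem : (Quotient.out q)⁻¹ * γ ∈ X) :
    Fg X ρ γ = (DirectSum.lof R ((H × G) ⧸ X) (fun q => (Mtilde X ρ).obj ⟨q⟩) q) ∘ₗ
      (ρ ⟨(Quotient.out q)⁻¹ * γ, hmem⟩ : M →ₗ[R] M) := by
  subst hq; rfl

noncomputable def eBaux :
    (MonoidAlgebra R (H × G)) ⊗[R] M →ₗ[R] (⨁ q : (H × G) ⧸ X, (Mtilde X ρ).obj ⟨q⟩) :=
  TensorProduct.lift
    ((Finsupp.lsum R fun γ => LinearMap.toSpanSingleton R _ (Fg X ρ γ)) ∘ₗ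
        (MonoidAlgebra.coeffLinearEquiv R).toLinearMap :
      MonoidAlgebra R (H × G) →ₗ[R] M →ₗ[R] (⨁ q : (H × G) ⧸ X, (Mtilde X ρ).obj ⟨q⟩))

lemma eBaux_single (γ : H × G) (c : R) (m : M) :
    eBaux X ρ (MonoidAlgebra.single γ c ⊗ₜ[R] m) = c • Fg X ρ γ m := by
  rw [eBaux, TensorProduct.lift.tmul, LinearMap.comp_apply]
  erw [Finsupp.lsum_single]
  rw [LinearMap.toSpanSingleton_apply, LinearMap.smul_apply]

noncomputable def eB :
    Ind R (H × G) X M ρ →ₗ[R] (⨁ q : (H × G) ⧸ X, (Mtilde X ρ).obj ⟨q⟩) :=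
  Submodule.liftQ _ (eBaux X ρ) (by
    rw [indRel, Submodule.span_le]
    rintro z ⟨γ, x, m, rfl⟩
    simp only [SetLike.mem_coe, LinearMap.mem_ker, map_sub, eBaux_single, one_smul]
    rw [sub_eq_zero]
    have hx : (Quotient.out (QuotientGroup.mk γ : (H × G) ⧸ X))⁻¹ * (γ * x) ∈ X := by
      rw [← mul_assoc]
      exact mul_mem (memX_aux X γ) x.2
    rw [Fg_eq X ρ (γ * (x : H × G)) (QuotientGroup.mk_mul_of_mem γ x.2) hx]
    simp only [Fg, LinearMap.comp_apply]
    congr 1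
    rw [show (⟨(Quotient.out (QuotientGroup.mk γ : (H × G) ⧸ X))⁻¹ * (γ * x), hx⟩ : X) =
        ⟨(Quotient.out (QuotientGroup.mk γ : (H × G) ⧸ X))⁻¹ * γ, memX_aux X γ⟩ * x
      from Subtype.ext (by simp [mul_assoc]), map_mul]
    rfl)

lemma eB_gen (γ : H × G) (c : R) (m : M) :
    eB X ρ (Ind.gen R (H × G) X M ρ γ c m) = c • Fg X ρ γ m := by
  exact Eq.trans (Submodule.liftQ_apply _ _ _) (eBaux_single X ρ γ c m)

noncomputable def eF :
    (⨁ q : (H × G) ⧸ X, (Mtilde X ρ).obj ⟨q⟩) →ₗ[R] Ind R (H × G) X M ρ :=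
  DirectSum.toModule R _ _ fun q =>
    ((indRel R (H × G) X M ρ).mkQ ∘ₗ
      ((TensorProduct.mk R (MonoidAlgebra R (H × G)) M)
        (MonoidAlgebra.single (Quotient.out q) (1 : R))) :
      M →ₗ[R] Ind R (H × G) X M ρ)

lemma eF_lof (q : (H × G) ⧸ X) (m : M) :
    eF X ρ (DirectSum.lof R _ (fun q => (Mtilde X ρ).obj ⟨q⟩) q m) =
      Ind.gen R (H × G) X M ρ (Quotient.out q) 1 m :=
  DirectSum.toModule_lof R _ _

noncomputable def eEquiv :
    (⨁ q : (H × G) ⧸ X, (Mtilde X ρ).obj ⟨q⟩) ≃ₗ[R] Ind R (H × G) X M ρ :=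
  LinearEquiv.ofLinear (eF X ρ) (eB X ρ)
    (ind_hom_ext X ρ fun γ m => by
      simp only [LinearMap.comp_apply, eB_gen, one_smul, LinearMap.id_apply]
      simp only [Fg, LinearMap.comp_apply]
      rw [eF_lof]
      refine Eq.trans (gen_rel X ρ (Quotient.out (QuotientGroup.mk γ : (H × G) ⧸ X))
        ⟨(Quotient.out (QuotientGroup.mk γ : (H × G) ⧸ X))⁻¹ * γ, memX_aux X γ⟩ m).symm ?_
      exact congrArg (fun z => Ind.gen R (H × G) X M ρ z 1 m) (mul_inv_cancel_left _ _))
    (by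
      refine DirectSum.linearMap_ext R fun q => LinearMap.ext fun m => ?_
      simp only [LinearMap.comp_apply, LinearMap.id_apply]; rw [eF_lof]
      rw [eB_gen, one_smul]
      have hmem : (Quotient.out q)⁻¹ * (Quotient.out q) ∈ X := by
        rw [inv_mul_cancel]; exact one_mem X
      rw [Fg_eq X ρ (Quotient.out q) (QuotientGroup.out_eq' q) hmem]
      simp only [LinearMap.comp_apply]
      rw [show (⟨(Quotient.out q)⁻¹ * (Quotient.out q), hmem⟩ : X) = 1
        from Subtype.ext (by simp), map_one]
      rfl)

lemma compat (p : H × G) :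
    (eF X ρ) ∘ₗ (rhoSaux X ρ p) = (rhoIaux X ρ p) ∘ₗ (eF X ρ) := by
  refine DirectSum.linearMap_ext R fun q => LinearMap.ext fun m => ?_
  simp only [LinearMap.comp_apply]; rw [rhoSaux_lof, eF_lof, eF_lof, rhoIaux_gen]
  rw [← gen_rel,
    show ((Quotient.out (p • q)) * ((xel X p q : H × G)) : H × G) = p * Quotient.out q
      from mul_inv_cancel_left _ _]

end AuxProof


/-- Theorem: for an `RX`-module `M` (given by a representation `ρ` of `X ≤ H × G` on `M`),
the assignment `(h,g)X ↦ M`, with structure maps determined by the chosen system of coset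
representatives `Quotient.out` (namely `M̃(h,g)(m) = (y,x) • m` where `(y,x) ∈ X` is the
unique element with `(ht,gs)(y,x)⁻¹` again a chosen representative), is a well-defined
functor `M̃`, and `Σ(M̃) = ⨁_{u ∈ (H×G)/X} M̃(u)` is isomorphic to `Ind_X^{H×G} M` as an
`(RH,RG)`-bimodule, i.e. as an `R(H×G)`-module. -/
theorem tilde_functor_and_ind {R M : Type u} [CommRing R] [AddCommGroup M] [Module R M]
    [Finite H] [Finite G] (ρ : X →* Module.End R M) :
    ∃ Mt : BisetCat H G ((H × G) ⧸ X) ⥤ ModuleCat.{u} R,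
    ∃ hobj : ∀ q : (H × G) ⧸ X, Mt.obj ⟨q⟩ = ModuleCat.of R M,
      -- the structure maps are the ones prescribed in the paper:
      (∀ (q : (H × G) ⧸ X) (h : H) (g : G) (y : H × G) (hy : y ∈ X)
          (_ : ((h, g) : H × G) * Quotient.out q * y⁻¹ =
            Quotient.out (((h, g) : H × G) • q)) (m : M),
        (CategoryTheory.eqToHom (hobj q).symm ≫
            Mt.map (⟨(h, g), quot_smul_aux X h g q⟩ :
              (⟨q⟩ : BisetCat H G ((H × G) ⧸ X)) ⟶ ⟨((h, g) : H × G) • q⟩) ≫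
            CategoryTheory.eqToHom (hobj (((h, g) : H × G) • q)) :
          ModuleCat.of R M ⟶ ModuleCat.of R M) m = ρ ⟨y, hy⟩ m) ∧
      -- `Σ(M̃)` is an `R(H×G)`-module:
      ∃ ρS : (H × G) →* Module.End R (⨁ q : (H × G) ⧸ X, Mt.obj ⟨q⟩),
        (∀ (h : H) (g : G) (q : (H × G) ⧸ X) (m : Mt.obj ⟨q⟩),
          ρS (h, g) (DirectSum.lof R _ (fun q => Mt.obj ⟨q⟩) q m) =
            DirectSum.lof R _ (fun q => Mt.obj ⟨q⟩) (((h, g) : H × G) • q)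
              (Mt.map (⟨(h, g), quot_smul_aux X h g q⟩ :
                (⟨q⟩ : BisetCat H G ((H × G) ⧸ X)) ⟶ ⟨((h, g) : H × G) • q⟩) m)) ∧
      -- `Ind_X^{H×G} M` is an `R(H×G)`-module:
      ∃ ρI : (H × G) →* Module.End R (Ind R (H × G) X M ρ),
        (∀ (p p' : H × G) (c : R) (m : M),
          ρI p (Ind.gen R (H × G) X M ρ p' c m) = Ind.gen R (H × G) X M ρ (p * p') c m) ∧
      -- and they are isomorphic as `R(H×G)`-modules:
      ∃ e : (⨁ q : (H × G) ⧸ X, Mt.obj ⟨q⟩) ≃ₗ[R] Ind R (H × G) X M ρ,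
        ∀ (p : H × G) x, e (ρS p x) = ρI p (e x) := by
  
  classical
  refine ⟨Mtilde X ρ, fun _ => rfl, ?_, rhoS X ρ, ?_, rhoI X ρ, ?_, eEquiv X ρ, ?_⟩
  · intro q h g y hy heq m
    have hcoe : (Quotient.out (((h, g) : H × G) • q))⁻¹ *
        (((h, g) : H × G) * Quotient.out q) = y := by
      rw [← heq]; group
    simp only [eqToHom_refl, Category.comp_id, Category.id_comp]
    exact congrArg (fun x : X => ρ x m) (Subtype.ext hcoe)
  · intro h g q m
    exact rhoSaux_lof X ρ (h, g) q m
  · intro p p' c m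
    exact rhoIaux_gen X ρ p p' c m
  · intro p x
    exact LinearMap.congr_fun (compat X ρ p) x
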